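/- Let B be an NFA with finite state set Q and finite alphabet Σ, and let Basic(B) be the NFA on Q whose alphabet consists of those x ∈ Σ such that it is not the case that δ(q,x) ⊆ {q} for all q ∈ Q, and such that there is no y ∈ Σ with x < y (i.e., δ(q,x) ⊆ δ(q,y) for all q and δ(q,x) ≠ δ(q,y) for some q), with the transitions inherited from B. Then B is D3-directing if and only if Basic(B) is D3-directing, and in that case the shortest D3-directing word of B has the same length as the shortest D3-directing word of Basic(B), i.e., d₃(B) = d₃(Basic(B)). -/
import Mathlib


/-- Action of an NFA transition function on a subset of states along a word. -/
def nfaRun {n m : ℕ} (δ : Fin n → Fin m → Finset (Fin n)) :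
    Finset (Fin n) → List (Fin m) → Finset (Fin n)
  | S, [] => S
  | S, a :: w => nfaRun δ (S.biUnion fun q => δ q a) w

/-- The word `w` is D3-directing for the NFA `δ`:
the intersection `⋂_{q ∈ Q} q·w` is nonempty. -/
def nfaD3word {n m : ℕ} (δ : Fin n → Fin m → Finset (Fin n)) (w : List (Fin m)) : Prop :=
  ∃ r : Fin n, ∀ q : Fin n, r ∈ nfaRun δ {q} w

/-- `x < y` for symbols of an NFA: `δ q x ⊆ δ q y` for all `q`, with strict
inclusion somewhere. -/
def nfaSymLt {n m : ℕ} (δ : Fin n → Fin m → Finset (Fin n)) (x y : Fin m) : Prop :=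
  (∀ q, δ q x ⊆ δ q y) ∧ (∃ q, δ q x ≠ δ q y)

/-- `x` is a symbol of `Basic(B)`: `x ≰ Id_Q` and `x` is not strictly below
any other symbol. -/
def nfaBasicSym {n m : ℕ} (δ : Fin n → Fin m → Finset (Fin n)) (x : Fin m) : Prop :=
  ¬ (∀ q, δ q x ⊆ {q}) ∧ ¬ ∃ y, nfaSymLt δ x y

lemma nfaKey {n m : ℕ} (δ : Fin n → Fin m → Finset (Fin n)) (x : Fin m) :
    (∀ q, δ q x ⊆ {q}) ∨ ∃ y, nfaBasicSym δ y ∧ ∀ q, δ q x ⊆ δ q y := by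
  classical
  obtain ⟨y, hy, hmax⟩ := Finset.exists_max_image
    (Finset.univ.filter (fun y => ∀ q, δ q x ⊆ δ q y))
    (fun y => ∑ q, (δ q y).card) ⟨x, by simp⟩
  simp only [Finset.mem_filter, Finset.mem_univ, true_and] at hy
  have hnolt : ¬ ∃ z, nfaSymLt δ y z := by
    rintro ⟨z, hzle, q0, hzne⟩
    have hz : z ∈ Finset.univ.filter (fun y => ∀ q, δ q x ⊆ δ q y) := by
      simp only [Finset.mem_filter, Finset.mem_univ, true_and]
      exact fun q => (hy q).trans (hzle q)
    have := hmax z hz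
    have : (∑ q, (δ q y).card) < ∑ q, (δ q z).card := by
      apply Finset.sum_lt_sum (fun i _ => Finset.card_le_card (hzle i))
      exact ⟨q0, Finset.mem_univ _, Finset.card_lt_card (lt_of_le_of_ne (hzle q0) hzne)⟩
    omega
  by_cases hsub : ∀ q, δ q y ⊆ {q}
  · exact Or.inl fun q => (hy q).trans (hsub q)
  · exact Or.inr ⟨y, ⟨hsub, hnolt⟩, hy⟩

noncomputable def nfaTr {n m : ℕ} (δ : Fin n → Fin m → Finset (Fin n)) (x : Fin m) :
    Option (Fin m) :=
  if h : ∀ q, δ q x ⊆ {q} then none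
  else some (Classical.choose ((nfaKey δ x).resolve_left h))

lemma nfaTr_none {n m : ℕ} (δ : Fin n → Fin m → Finset (Fin n)) {x : Fin m}
    (h : nfaTr δ x = none) : ∀ q, δ q x ⊆ {q} := by
  unfold nfaTr at h
  split at h
  · assumption
  · simp at h

lemma nfaTr_some {n m : ℕ} (δ : Fin n → Fin m → Finset (Fin n)) {x y : Fin m}
    (h : nfaTr δ x = some y) : nfaBasicSym δ y ∧ ∀ q, δ q x ⊆ δ q y := by
  unfold nfaTr at h
  split at h
  · exact absurd h (by simp)
  · next h' =>
    obtain rfl : Classical.choose ((nfaKey δ x).resolve_left h') = y := by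
      simpa using h
    exact Classical.choose_spec ((nfaKey δ x).resolve_left h')

lemma nfaRun_mono {n m : ℕ} (δ : Fin n → Fin m → Finset (Fin n)) :
    ∀ (w : List (Fin m)) (S T : Finset (Fin n)), S ⊆ T →
      nfaRun δ S w ⊆ nfaRun δ T (w.filterMap (nfaTr δ))
  | [], S, T, h => h
  | x :: w, S, T, h => by
    cases hx : nfaTr δ x with
    | none =>
      have hsub : (S.biUnion fun q => δ q x) ⊆ T := by
        intro r hr
        obtain ⟨q, hq, hr⟩ := Finset.mem_biUnion.1 hr
        have := nfaTr_none δ hx q hr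
        simp only [Finset.mem_singleton] at this
        exact this ▸ h hq
      simpa [List.filterMap, hx, nfaRun] using nfaRun_mono δ w _ T hsub
    | some y =>
      have hsub : (S.biUnion fun q => δ q x) ⊆ (T.biUnion fun q => δ q y) := by
        intro r hr
        obtain ⟨q, hq, hr⟩ := Finset.mem_biUnion.1 hr
        exact Finset.mem_biUnion.2 ⟨q, h hq, (nfaTr_some δ hx).2 q hr⟩
      simpa [List.filterMap, hx, nfaRun] using nfaRun_mono δ w _ _ hsub

lemma nfaTr_basic {n m : ℕ} (δ : Fin n → Fin m → Finset (Fin n)) (w : List (Fin m)) :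
    ∀ x ∈ w.filterMap (nfaTr δ), nfaBasicSym δ x := by
  intro x hx
  obtain ⟨a, _, ha⟩ := List.mem_filterMap.1 hx
  exact (nfaTr_some δ ha).1

lemma nfaTr_d3 {n m : ℕ} (δ : Fin n → Fin m → Finset (Fin n)) {w : List (Fin m)}
    (h : nfaD3word δ w) : nfaD3word δ (w.filterMap (nfaTr δ)) := by
  obtain ⟨r, hr⟩ := h
  exact ⟨r, fun q => nfaRun_mono δ w {q} {q} (subset_refl _) (hr q)⟩

theorem stmt14 (n m : ℕ) (δ : Fin n → Fin m → Finset (Fin n)) :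
    -- B is D3-directing iff Basic(B) is D3-directing
    ((∃ w, nfaD3word δ w) ↔
      (∃ w, (∀ x ∈ w, nfaBasicSym δ x) ∧ nfaD3word δ w)) ∧
    -- and in that case d₃(B) = d₃(Basic(B))
    ((∃ w, nfaD3word δ w) →
      sInf {l : ℕ | ∃ w, w.length = l ∧ nfaD3word δ w} =
        sInf {l : ℕ | ∃ w, w.length = l ∧ (∀ x ∈ w, nfaBasicSym δ x) ∧
          nfaD3word δ w}) := by
  constructor
  · constructor
    · rintro ⟨w, hw⟩
      exact ⟨w.filterMap (nfaTr δ), nfaTr_basic δ w, nfaTr_d3 δ hw⟩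
    · rintro ⟨w, _, hw⟩
      exact ⟨w, hw⟩
  · rintro ⟨w0, hw0⟩
    set A := {l : ℕ | ∃ w, w.length = l ∧ nfaD3word δ w} with hA
    set B := {l : ℕ | ∃ w, w.length = l ∧ (∀ x ∈ w, nfaBasicSym δ x) ∧ nfaD3word δ w}
      with hB
    have hAne : A.Nonempty := ⟨w0.length, w0, rfl, hw0⟩
    have hBne : B.Nonempty :=
      ⟨(w0.filterMap (nfaTr δ)).length, _, rfl, nfaTr_basic δ w0, nfaTr_d3 δ hw0⟩
    apply le_antisymm
    · obtain ⟨w, hlen, _, hw⟩ := Nat.sInf_mem hBne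
      exact Nat.sInf_le ⟨w, hlen, hw⟩
    · obtain ⟨w, hlen, hw⟩ := Nat.sInf_mem hAne
      calc sInf B ≤ (w.filterMap (nfaTr δ)).length :=
            Nat.sInf_le ⟨_, rfl, nfaTr_basic δ w, nfaTr_d3 δ hw⟩
        _ ≤ w.length := List.length_filterMap_le _ _
        _ = sInf A := hlen
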